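/- Let V : ℝ² → ℝ be C¹ with V ≥ V₀ > 0, and suppose that for each x ∈ ℝ² the function t ↦ V(tx) - (1/2)⟨∇V(tx), tx⟩ is nondecreasing on (0, ∞). Then for all x ∈ ℝ²: V(x) - (1/2)⟨∇V(x), x⟩ ≥ V₀ and 0 ≤ ⟨∇V(x), x⟩ ≤ 2V(x). -/

import Mathlib

open scoped RealInnerProductSpace

open InnerProductSpace Filter Topology

theorem stmt_4 (V : EuclideanSpace ℝ (Fin 2) → ℝ) (V₀ : ℝ)
    (hV : ContDiff ℝ 1 V) (hV₀ : 0 < V₀) (hVlb : ∀ x, V₀ ≤ V x)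
    (hmono : ∀ x : EuclideanSpace ℝ (Fin 2),
      MonotoneOn (fun t : ℝ => V (t • x) - (1 / 2) * ⟪gradient V (t • x), t • x⟫)
        (Set.Ioi (0 : ℝ))) :
    ∀ x : EuclideanSpace ℝ (Fin 2),
      V₀ ≤ V x - (1 / 2) * ⟪gradient V x, x⟫ ∧
      0 ≤ ⟪gradient V x, x⟫ ∧ ⟪gradient V x, x⟫ ≤ 2 * V x := by
  intro x
  set g : ℝ → ℝ := fun t => V (t • x) with hg
  set W : ℝ → ℝ := fun t : ℝ =>
    V (t • x) - (1 / 2) * ⟪gradient V (t • x), t • x⟫ with hWdef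
  have hVd : Differentiable ℝ V := hV.differentiable one_ne_zero
  have hgrad : ∀ t : ℝ, HasDerivAt g ⟪gradient V (t • x), x⟫ t := by
    intro t
    have h1 : HasDerivAt (fun s : ℝ => s • x) x t := by
      simpa using (hasDerivAt_id t).smul_const x
    have h2 : HasFDerivAt V (toDual ℝ _ (gradient V (t • x))) (t • x) :=
      (hVd (t • x)).hasGradientAt.hasFDerivAt
    have h3 := h2.comp_hasDerivAt t h1
    simp at h3 ⊢
    exact h3
  have hgc : Continuous (gradient V) := by
    have : gradient V = fun y => (toDual ℝ _).symm (fderiv ℝ V y) := rfl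
    rw [this]
    exact (toDual ℝ _).symm.continuous.comp (hV.continuous_fderiv one_ne_zero)
  have hsmul : Continuous fun t : ℝ => t • x := continuous_id.smul continuous_const
  have hWc : Continuous W := by
    apply (hV.continuous.comp hsmul).sub
    exact continuous_const.mul ((hgc.comp hsmul).inner hsmul)
  have hW0 : W 0 = V 0 := by simp [hWdef]
  -- Step A : V₀ ≤ W 1
  have hA : V 0 ≤ W 1 := by
    have htend : Tendsto W (𝓝[>] (0:ℝ)) (𝓝 (V 0)) := by
      rw [← hW0]
      exact (hWc.continuousAt).continuousWithinAt
    refine le_of_tendsto htend ?_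
    filter_upwards [Ioc_mem_nhdsGT one_pos] with t ht
    exact hmono x ht.1 (Set.mem_Ioi.mpr one_pos) ht.2
  have hW1V0 : V₀ ≤ W 1 := le_trans (hVlb 0) hA
  -- Step B : W 1 ≤ g 1
  set c : ℝ := W 1 with hc
  set H : ℝ → ℝ := fun t => g t * (t ^ 2)⁻¹ + c * (1 - (t ^ 2)⁻¹) with hH
  have hWg : ∀ t : ℝ, W t = g t - (1 / 2) * (t * ⟪gradient V (t • x), x⟫) := by
    intro t
    simp only [hWdef, hg, real_inner_smul_right]
  have hHd : ∀ t : ℝ, t ≠ 0 →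
      HasDerivAt H ((2 * (c - W t)) * (t ^ 3)⁻¹) t := by
    intro t ht
    have hinv : HasDerivAt (fun s : ℝ => ((s : ℝ) ^ 2)⁻¹)
        (-(2 * t) / (t ^ 2) ^ 2) t := by
      have h4 := (hasDerivAt_pow 2 t).inv (pow_ne_zero 2 ht)
      simp at h4 ⊢
      exact h4
    have h3 : HasDerivAt H
        ((⟪gradient V (t • x), x⟫ * (t ^ 2)⁻¹ + g t * (-(2 * t) / (t ^ 2) ^ 2)) +
          c * (0 - -(2 * t) / (t ^ 2) ^ 2)) t :=
      ((hgrad t).mul hinv).add ((hasDerivAt_const t (1:ℝ)).sub hinv |>.const_mul c)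
    convert h3 using 1
    rw [hWg t]
    field_simp
    ring
  have hanti : AntitoneOn H (Set.Ici (1:ℝ)) := by
    apply antitoneOn_of_deriv_nonpos (convex_Ici 1)
    · intro t ht
      have htne : t ≠ 0 := by
        have : (1:ℝ) ≤ t := ht
        positivity
      exact (hHd t htne).continuousAt.continuousWithinAt
    · intro t ht
      rw [interior_Ici] at ht
      have htne : t ≠ 0 := by
        have : (1:ℝ) < t := ht
        positivity
      exact (hHd t htne).differentiableAt.differentiableWithinAt
    · intro t ht
      rw [interior_Ici] at ht
      have ht1 : (1:ℝ) < t := ht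
      have htne : t ≠ 0 := by positivity
      rw [(hHd t htne).deriv]
      have hWt : c ≤ W t :=
        hmono x (Set.mem_Ioi.mpr one_pos) (Set.mem_Ioi.mpr (by linarith)) ht1.le
      have h1 : 2 * (c - W t) ≤ 0 := by linarith
      have h2 : (0:ℝ) ≤ (t ^ 3)⁻¹ := by positivity
      exact mul_nonpos_of_nonpos_of_nonneg h1 h2
  have hglb : ∀ t : ℝ, V₀ ≤ g t := fun t => hVlb _
  clear_value g W c H
  have hHle : ∀ T : ℝ, 1 ≤ T → c * (1 - (T ^ 2)⁻¹) ≤ g 1 := by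
    intro T hT
    have h1 : H T ≤ H 1 := hanti (Set.mem_Ici.mpr le_rfl) (Set.mem_Ici.mpr hT) hT
    have h2 : H 1 = g 1 := by simp [hH]
    have h3 : (0:ℝ) ≤ g T * (T ^ 2)⁻¹ := by
      have : (0:ℝ) ≤ g T := le_trans hV₀.le (hglb T)
      positivity
    have h4 : c * (1 - (T ^ 2)⁻¹) ≤ H T := by
      simp only [hH]; linarith
    linarith
  have hcg : c ≤ g 1 := by
    have h2 : Tendsto (fun T : ℝ => (T ^ 2)⁻¹) atTop (𝓝 0) :=
      tendsto_inv_atTop_zero.comp (tendsto_pow_atTop (by norm_num : (2:ℕ) ≠ 0))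
    have htend : Tendsto (fun T : ℝ => c * (1 - (T ^ 2)⁻¹)) atTop (𝓝 (c * (1 - 0))) :=
      (tendsto_const_nhds.sub h2).const_mul c
    have : c * (1 - 0) ≤ g 1 :=
      le_of_tendsto htend (eventually_atTop.mpr ⟨1, fun T hT => hHle T hT⟩)
    simpa using this
  -- Conclude
  have hW1 : W 1 = V x - (1 / 2) * ⟪gradient V x, x⟫ := by
    simp [hWdef]
  have hg1 : g 1 = V x := by simp [hg]
  rw [hc, hW1] at hW1V0
  rw [hc, hW1, hg1] at hcg
  refine ⟨hW1V0, by linarith, by linarith⟩
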